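/- arXiv:1010.4497 — 2 statements merged into one kernel-verified Lean document; each statement's English description precedes it below -/
import Mathlib

section
/- Let M = (V, D) be a proper set system. Then M is a delta-matroid if and only if for all X, Y ⊆ V such that (M*Y)[X] is proper, d_{M*Y} = d_{(M*Y)[X]}, i.e., the minimum cardinality of a set in M*Y equals the minimum cardinality of a set of M*Y contained in X. -/
open scoped symmDiff

variable {V : Type*} [DecidableEq V] [Fintype V]

/-- Distance from `X` to the set system with family `D`. -/
noncomputable def dSS (D : Set (Finset V)) (X : Finset V) : ℕ :=
  sInf ((fun Y => (X ∆ Y).card) '' D)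

/-- Pivot (twist) of a set-system family on `X`. -/
def pivotSS (D : Set (Finset V)) (X : Finset V) : Set (Finset V) :=
  (fun Y => Y ∆ X) '' D

/-- Loop complementation on `v`. -/
def lcSS (D : Set (Finset V)) (v : V) : Set (Finset V) :=
  D ∆ ((fun Z => Z ∪ {v}) '' {Z ∈ D | v ∉ Z})

/-- Dual pivot on `v`. -/
def dpSS (D : Set (Finset V)) (v : V) : Set (Finset V) :=
  D ∆ ((fun Z => Z \ {v}) '' {Z ∈ D | v ∈ Z})

/-- Delta-matroid: proper set system with the symmetric exchange axiom. -/
def DeltaMatroid (D : Set (Finset V)) : Prop :=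
  D.Nonempty ∧ ∀ X ∈ D, ∀ Y ∈ D, ∀ u ∈ X ∆ Y, ∃ v ∈ X ∆ Y, X ∆ {u, v} ∈ D

/-- Inclusion-minimal members. -/
def minFam (D : Set (Finset V)) : Set (Finset V) :=
  {X ∈ D | ∀ Y ∈ D, Y ⊆ X → Y = X}

/-- Inclusion-maximal members. -/
def maxFam (D : Set (Finset V)) : Set (Finset V) :=
  {X ∈ D | ∀ Y ∈ D, X ⊆ Y → Y = X}

/-- Members of minimum cardinality. -/
def minCardFam (D : Set (Finset V)) : Set (Finset V) :=
  {X ∈ D | ∀ Y ∈ D, X.card ≤ Y.card}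

/-- Members of maximum cardinality. -/
def maxCardFam (D : Set (Finset V)) : Set (Finset V) :=
  {X ∈ D | ∀ Y ∈ D, Y.card ≤ X.card}

/-- All members have the same cardinality. -/
def Equicardinal (F : Set (Finset V)) : Prop :=
  ∀ X ∈ F, ∀ Y ∈ F, X.card = Y.card

/-- Restriction of the family to subsets of `X`. -/
def restrictSS (D : Set (Finset V)) (X : Finset V) : Set (Finset V) :=
  {Y ∈ D | Y ⊆ X}

private lemma empty_symmDiff' (A : Finset V) : (∅ : Finset V) ∆ A = A := by
  ext x; simp [Finset.mem_symmDiff]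

private lemma dSS_le' {D : Set (Finset V)} {A : Finset V} (hA : A ∈ D) :
    dSS D ∅ ≤ A.card :=
  Nat.sInf_le ⟨A, hA, by simp only [empty_symmDiff']⟩

private lemma dSS_witness {D : Set (Finset V)} (hD : D.Nonempty) :
    ∃ A ∈ D, A.card = dSS D ∅ := by
  have hne : ((fun Y => ((∅ : Finset V) ∆ Y).card) '' D).Nonempty := hD.image _
  obtain ⟨A, hA, hcard⟩ := Nat.sInf_mem hne
  exact ⟨A, hA, by simpa [dSS, empty_symmDiff'] using hcard⟩

private lemma mem_pivot {D : Set (Finset V)} {Y Z : Finset V} :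
    Z ∈ pivotSS D Y ↔ Z ∆ Y ∈ D := by
  constructor
  · rintro ⟨W, hW, rfl⟩
    have : W ∆ Y ∆ Y = W := by simp [symmDiff_assoc]
    rwa [this]
  · intro h
    exact ⟨Z ∆ Y, h, by simp [symmDiff_assoc]⟩

private lemma deltaMatroid_pivot {D : Set (Finset V)} (h : DeltaMatroid D) (Y : Finset V) :
    DeltaMatroid (pivotSS D Y) := by
  obtain ⟨hne, hex⟩ := h
  refine ⟨hne.image _, ?_⟩
  intro P hP Q hQ u hu
  rw [mem_pivot] at hP hQ
  have hPQ : (P ∆ Y) ∆ (Q ∆ Y) = P ∆ Q := by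
    ext x; simp [Finset.mem_symmDiff]; tauto
  obtain ⟨v, hv, hPv⟩ := hex (P ∆ Y) hP (Q ∆ Y) hQ u (by rwa [hPQ])
  refine ⟨v, by rwa [hPQ] at hv, ?_⟩
  rw [mem_pivot]
  have : P ∆ {u, v} ∆ Y = P ∆ Y ∆ {u, v} := by
    ext x; simp [Finset.mem_symmDiff]; tauto
  rwa [this]

private lemma core {N : Set (Finset V)} (hN : DeltaMatroid N) {X : Finset V}
    (hX : (restrictSS N X).Nonempty) :
    dSS N ∅ = dSS (restrictSS N X) ∅ := by
  obtain ⟨B, hBN, hBX⟩ := id hX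
  obtain ⟨hne, hex⟩ := hN
  set d := dSS N ∅ with hd
  have key : ∀ n : ℕ, ∀ A ∈ N, A.card = d → (A \ X).card ≤ n →
      ∃ A' ∈ N, A'.card = d ∧ A' ⊆ X := by
    intro n
    induction n with
    | zero =>
      intro A hA hcard h0
      refine ⟨A, hA, hcard, ?_⟩
      intro x hx
      by_contra hxX
      have hmem : x ∈ A \ X := Finset.mem_sdiff.mpr ⟨hx, hxX⟩
      have : A \ X = ∅ := Finset.card_eq_zero.mp (Nat.le_zero.mp h0)
      simp [this] at hmem
    | succ n ih =>
      intro A hA hcard hle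
      by_cases hsub : A ⊆ X
      · exact ⟨A, hA, hcard, hsub⟩
      · obtain ⟨u, huA, huX⟩ := Finset.not_subset.mp hsub
        have huB : u ∉ B := fun h => huX (hBX h)
        have huAB : u ∈ A ∆ B := by simp [Finset.mem_symmDiff, huA, huB]
        obtain ⟨v, hvAB, hAv⟩ := hex A hA B hBN u huAB
        have hApos : 1 ≤ A.card := Finset.card_pos.mpr ⟨u, huA⟩
        by_cases hvu : v = u
        · exfalso
          subst hvu
          have heq : A ∆ {v, v} = A.erase v := by
            ext x; by_cases hx : x = v <;> simp_all [Finset.mem_symmDiff]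
          have h1 := dSS_le' hAv
          rw [heq, Finset.card_erase_of_mem huA] at h1
          omega
        · by_cases hvA : v ∈ A
          · exfalso
            have hne' : u ≠ v := fun h => hvu h.symm
            have heq : A ∆ {u, v} = (A.erase u).erase v := by
              ext x; by_cases hx : x = u <;> by_cases hy : x = v <;>
                simp_all [Finset.mem_symmDiff]
            have h1 := dSS_le' hAv
            rw [heq] at h1
            have h2 : ((A.erase u).erase v).card ≤ (A.erase u).card :=
              Finset.card_le_card (Finset.erase_subset _ _)
            rw [Finset.card_erase_of_mem huA] at h2
            omega
          · have hvB : v ∈ B := by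
              rcases Finset.mem_symmDiff.mp hvAB with h | h
              · exact absurd h.1 hvA
              · exact h.1
            have hvX : v ∈ X := hBX hvB
            have hne' : u ≠ v := fun h => hvu h.symm
            have heq : A ∆ {u, v} = insert v (A.erase u) := by
              ext x; by_cases hx : x = u <;> by_cases hy : x = v <;>
                simp_all [Finset.mem_symmDiff]
            have hcard' : (A ∆ {u, v}).card = d := by
              rw [heq, Finset.card_insert_of_notMem (by simp [hvA]),
                Finset.card_erase_of_mem huA]
              omega
            refine ih (A ∆ {u, v}) hAv hcard' ?_
            have hset : (A ∆ {u, v}) \ X = (A \ X).erase u := by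
              rw [heq]
              ext x
              by_cases hx : x = u <;> by_cases hy : x = v <;>
                simp_all [Finset.mem_sdiff, Finset.mem_erase]
            have hu' : u ∈ A \ X := Finset.mem_sdiff.mpr ⟨huA, huX⟩
            have hpos : 1 ≤ (A \ X).card := Finset.card_pos.mpr ⟨u, hu'⟩
            rw [hset, Finset.card_erase_of_mem hu']
            omega
  obtain ⟨A0, hA0, hc0⟩ := dSS_witness hne
  obtain ⟨A, hAN, hAc, hAX⟩ := key (A0 \ X).card A0 hA0 hc0 le_rfl
  apply le_antisymm
  · obtain ⟨C, hC, hCc⟩ := dSS_witness hX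
    calc d ≤ C.card := dSS_le' hC.1
    _ = _ := hCc
  · calc dSS (restrictSS N X) ∅ ≤ A.card := dSS_le' (⟨hAN, hAX⟩ : A ∈ restrictSS N X)
    _ = d := hAc

/-- `M` is a delta-matroid iff for all `X, Y` with `(M*Y)[X]`
proper, the minimum cardinality of a set in `M*Y` equals the minimum
cardinality of a set of `M*Y` contained in `X`. -/

theorem deltaMatroid_iff_dist_restrict (D : Set (Finset V)) (hD : D.Nonempty) :
    DeltaMatroid D ↔ ∀ X Y : Finset V, (restrictSS (pivotSS D Y) X).Nonempty →
      dSS (pivotSS D Y) ∅ = dSS (restrictSS (pivotSS D Y) X) ∅ := by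
  constructor
  · intro h X Y hne
    exact core (deltaMatroid_pivot h Y) hne
  · intro H
    refine ⟨hD, ?_⟩
    intro A hA B hB u hu
    set Y : Finset V := A ∆ {u} with hY
    set X : Finset V := (A ∆ B).erase u with hXdef
    have hBY : B ∆ Y = (A ∆ B).erase u := by
      rw [hY]
      ext x
      by_cases hx : x = u <;> [skip; skip] <;>
        · simp_all [Finset.mem_symmDiff, Finset.mem_erase]; tauto
    have hBN : B ∆ Y ∈ pivotSS D Y := ⟨B, hB, rfl⟩
    have hres : (restrictSS (pivotSS D Y) X).Nonempty :=
      ⟨B ∆ Y, hBN, by rw [hBY]⟩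
    have hu' : ({u} : Finset V) ∈ pivotSS D Y := by
      rw [mem_pivot]
      have : ({u} : Finset V) ∆ Y = A := by
        rw [hY]; ext x; simp [Finset.mem_symmDiff]; tauto
      rwa [this]
    have hle1 : dSS (pivotSS D Y) ∅ ≤ 1 := by
      have := dSS_le' hu'
      simpa using this
    have heq := H X Y hres
    obtain ⟨S, hS, hScard⟩ := dSS_witness hres
    have hS1 : S.card ≤ 1 := by omega
    interval_cases hc : S.card
    · -- S = ∅, so ∅ ∈ pivot, i.e. Y ∈ D
      have hSe : S = ∅ := Finset.card_eq_zero.mp hc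
      have h0 : (∅ : Finset V) ∈ pivotSS D Y := hSe ▸ hS.1
      rw [mem_pivot] at h0
      have hYD : Y ∈ D := by rwa [empty_symmDiff'] at h0
      refine ⟨u, hu, ?_⟩
      have : ({u, u} : Finset V) = {u} := by simp
      rw [this]
      exact hYD
    · obtain ⟨v, rfl⟩ := Finset.card_eq_one.mp hc
      have hvX : v ∈ X := hS.2 (Finset.mem_singleton_self v)
      rw [hXdef, Finset.mem_erase] at hvX
      obtain ⟨hvu, hvAB⟩ := hvX
      refine ⟨v, hvAB, ?_⟩
      have hmem := hS.1
      rw [mem_pivot] at hmem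
      have : ({v} : Finset V) ∆ Y = A ∆ {u, v} := by
        rw [hY]
        ext x
        by_cases hx : x = u <;> by_cases hy : x = v <;>
          simp_all [Finset.mem_symmDiff]
      rwa [this] at hmem
end

section
/- Let G be a symmetric V × V matrix over GF(2) (a graph with loops allowed) and v ∈ V. Then among the three nullities n(G), n(G∖v), n(G+v), precisely two are equal to some value m and the third equals m + 1, where G∖v is the principal submatrix of G obtained by deleting the row and column of v. -/
open scoped symmDiff

variable {V : Type*} [DecidableEq V] [Fintype V]

/-- Loop complementation on a graph (symmetric matrix over GF(2)): add `1` to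
the diagonal entry at `v`. -/
def loopCompl (G : Matrix V V (ZMod 2)) (v : V) : Matrix V V (ZMod 2) :=
  G + Matrix.single v v 1

/-- The induced subgraph on `V ∖ {v}`: delete the row and column of `v`. -/
def deleteVertex (G : Matrix V V (ZMod 2)) (v : V) :
    Matrix {x : V // x ≠ v} {x : V // x ≠ v} (ZMod 2) :=
  G.submatrix Subtype.val Subtype.val

/-- Nullity of a square matrix over GF(2). -/
noncomputable def nullity {n : Type*} [Fintype n] [DecidableEq n]
    (A : Matrix n n (ZMod 2)) : ℕ :=
  Fintype.card n - A.rank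

open Matrix Module

set_option linter.unusedSectionVars false

lemma zmod2_cases : ∀ c : ZMod 2, c = 0 ∨ c = 1 := by decide

lemma zmod2_neg : ∀ c : ZMod 2, -c = c := by decide

/-- extension by zero -/
def extMap (v : V) : ({x : V // x ≠ v} → ZMod 2) →ₗ[ZMod 2] (V → ZMod 2) where
  toFun y u := if h : u = v then 0 else y ⟨u, h⟩
  map_add' a b := by funext u; by_cases h : u = v <;> simp [h]
  map_smul' c a := by funext u; by_cases h : u = v <;> simp [h]

lemma extMap_injective (v : V) : Function.Injective (extMap v) := by
  intro a b hab
  funext u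
  have := congrFun hab u.val
  simpa [extMap, u.prop] using this

lemma mulVec_extMap (G : Matrix V V (ZMod 2)) (v : V) (y : {x : V // x ≠ v} → ZMod 2)
    (a : {x : V // x ≠ v}) :
    (deleteVertex G v).mulVec y a = G.mulVec (extMap v y) a.val := by
  classical
  symm
  simp only [Matrix.mulVec, dotProduct]
  rw [Finset.sum_eq_sum_sdiff_singleton_add (Finset.mem_univ v)
    (fun u => G a.val u * extMap v y u)]
  have h0 : extMap v y v = 0 := by simp [extMap]
  rw [h0, mul_zero, add_zero]
  rw [show (∑ x ∈ Finset.univ \ {v}, G a.val x * extMap v y x)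
      = ∑ u : {x : V // x ≠ v}, G a.val u.val * extMap v y u.val from
    Finset.sum_subtype _ (by simp) _]
  simp only [deleteVertex, Matrix.submatrix_apply]
  exact Finset.sum_congr rfl (fun u _ => by simp [extMap, u.prop])

lemma nullity_eq_finrank_ker {n : Type*} [Fintype n] [DecidableEq n]
    (A : Matrix n n (ZMod 2)) :
    nullity A = finrank (ZMod 2) (LinearMap.ker A.mulVecLin) := by
  have h := LinearMap.finrank_range_add_finrank_ker A.mulVecLin
  rw [Module.finrank_pi] at h
  unfold nullity Matrix.rank
  omega

lemma finrank_inf_ker_add_one {M : Type*} [AddCommGroup M] [Module (ZMod 2) M]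
    [FiniteDimensional (ZMod 2) M]
    (p : Submodule (ZMod 2) M) (φ : M →ₗ[ZMod 2] (ZMod 2)) (x : M) (hx : x ∈ p)
    (hφx : φ x ≠ 0) :
    finrank (ZMod 2) (p ⊓ LinearMap.ker φ : Submodule (ZMod 2) M) + 1
      = finrank (ZMod 2) p := by
  set ψ := φ.comp p.subtype with hψ
  have h1 : LinearMap.ker ψ = Submodule.comap p.subtype (LinearMap.ker φ) :=
    LinearMap.ker_comp _ _
  have h2 : Submodule.map p.subtype (LinearMap.ker ψ) = p ⊓ LinearMap.ker φ := by
    rw [h1, Submodule.map_comap_subtype]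
  have h3 : finrank (ZMod 2) (p ⊓ LinearMap.ker φ : Submodule (ZMod 2) M)
      = finrank (ZMod 2) (LinearMap.ker ψ) := by
    rw [← h2]
    exact (LinearEquiv.finrank_eq
      (Submodule.equivMapOfInjective p.subtype p.injective_subtype _)).symm
  have h4 : LinearMap.range ψ = ⊤ := by
    rw [LinearMap.range_eq_top]
    intro c
    rcases zmod2_cases c with rfl | rfl
    · exact ⟨0, map_zero _⟩
    · refine ⟨⟨x, hx⟩, ?_⟩
      have : ψ ⟨x, hx⟩ = φ x := rfl
      rw [this]
      rcases zmod2_cases (φ x) with h | h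
      · exact absurd h hφx
      · exact h
  have h5 := LinearMap.finrank_range_add_finrank_ker ψ
  rw [h4, finrank_top, Module.finrank_self] at h5
  omega

lemma finrank_sup_span_singleton {M : Type*} [AddCommGroup M] [Module (ZMod 2) M]
    [FiniteDimensional (ZMod 2) M]
    (p : Submodule (ZMod 2) M) (w : M) (hw : w ∉ p) (hw0 : w ≠ 0) :
    finrank (ZMod 2) (p ⊔ Submodule.span (ZMod 2) {w} : Submodule (ZMod 2) M)
      = finrank (ZMod 2) p + 1 := by
  have hinf : p ⊓ Submodule.span (ZMod 2) {w} = ⊥ := by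
    rw [Submodule.eq_bot_iff]
    rintro x ⟨hxp, hxs⟩
    rcases Submodule.mem_span_singleton.1 hxs with ⟨c, rfl⟩
    rcases zmod2_cases c with rfl | rfl
    · simp
    · rw [one_smul] at hxp; exact absurd hxp hw
  have h := Submodule.finrank_sup_add_finrank_inf_eq p (Submodule.span (ZMod 2) {w})
  rw [hinf, finrank_bot, finrank_span_singleton hw0] at h
  omega

lemma zmod2_add_self : ∀ a : ZMod 2, a + a = 0 := by decide

lemma stdBasis_mulVec (v : V) (x : V → ZMod 2) :
    (Matrix.single v v 1).mulVec x = Pi.single v (x v) := by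
  funext u
  by_cases h : u = v
  · subst h
    simp [Matrix.mulVec, dotProduct, Matrix.single, ite_and, ite_mul,
      Finset.sum_ite_eq]
  · simp [Matrix.mulVec, dotProduct, Matrix.single, ite_and,
      Ne.symm h, h, Pi.single_apply]

lemma mem_ker_loopCompl (G : Matrix V V (ZMod 2)) (v : V) (x : V → ZMod 2) :
    x ∈ LinearMap.ker (loopCompl G v).mulVecLin ↔ G.mulVec x = Pi.single v (x v) := by
  rw [LinearMap.mem_ker, Matrix.mulVecLin_apply, loopCompl, Matrix.add_mulVec,
    stdBasis_mulVec]
  constructor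
  · intro h
    funext u
    have h1 := congrFun h u
    have h2 := eq_neg_of_add_eq_zero_left h1
    rwa [zmod2_neg] at h2
  · intro h
    funext u
    have h1 := congrFun h u
    simp only [Pi.add_apply, Pi.zero_apply] at h1 ⊢
    rw [h1, zmod2_add_self]

lemma symm_ker_vanish (G : Matrix V V (ZMod 2)) (hG : G.IsSymm) (v : V)
    (w : V → ZMod 2) (hw : G.mulVec w = Pi.single v 1) :
    ∀ x, G.mulVec x = 0 → x v = 0 := by
  intro x hx
  have h1 : Pi.single v (1 : ZMod 2) ⬝ᵥ x = G.mulVec w ⬝ᵥ x := by rw [hw]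
  have h2 : G.mulVec w ⬝ᵥ x = (0 : ZMod 2) := by
    rw [dotProduct_comm, Matrix.dotProduct_mulVec, ← Matrix.mulVec_transpose,
      hG.eq, hx]
    simp
  have h3 : Pi.single v (1 : ZMod 2) ⬝ᵥ x = x v := by
    rw [single_dotProduct, one_mul]
  rw [h3, h2] at h1
  exact h1

lemma nullity_deleteVertex_eq (G : Matrix V V (ZMod 2)) (v : V) :
    nullity (deleteVertex G v)
      = finrank (ZMod 2) ((LinearMap.ker ((LinearMap.funLeft (ZMod 2) (ZMod 2)
          (Subtype.val : {x : V // x ≠ v} → V)).comp G.mulVecLin)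
          ⊓ LinearMap.ker (LinearMap.proj (R := ZMod 2) (φ := fun _ : V => ZMod 2) v)
          : Submodule (ZMod 2) (V → ZMod 2))) := by
  rw [nullity_eq_finrank_ker]
  have hmap : Submodule.map (extMap v) (LinearMap.ker (deleteVertex G v).mulVecLin)
      = (LinearMap.ker ((LinearMap.funLeft (ZMod 2) (ZMod 2)
          (Subtype.val : {x : V // x ≠ v} → V)).comp G.mulVecLin)
          ⊓ LinearMap.ker (LinearMap.proj (R := ZMod 2) (φ := fun _ : V => ZMod 2) v)) := by
    ext x
    constructor
    · rintro ⟨y, hy, rfl⟩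
      simp only [SetLike.mem_coe, LinearMap.mem_ker, Matrix.mulVecLin_apply] at hy
      rw [Submodule.mem_inf]
      refine ⟨?_, ?_⟩
      · rw [LinearMap.mem_ker, LinearMap.comp_apply, Matrix.mulVecLin_apply]
        funext u
        rw [LinearMap.funLeft_apply, ← mulVec_extMap, hy]
      · rw [LinearMap.mem_ker, LinearMap.proj_apply]
        simp [extMap]
    · rintro ⟨h1, h2⟩
      simp only [SetLike.mem_coe, LinearMap.mem_ker, LinearMap.comp_apply,
        Matrix.mulVecLin_apply] at h1
      simp only [SetLike.mem_coe, LinearMap.mem_ker, LinearMap.proj_apply] at h2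
      have hx : extMap v (fun u : {x : V // x ≠ v} => x u.val) = x := by
        funext u
        by_cases h : u = v
        · subst h; simpa [extMap] using h2.symm
        · simp [extMap, h]
      refine Submodule.mem_map.2 ⟨fun u => x u.val, ?_, hx⟩
      rw [LinearMap.mem_ker, Matrix.mulVecLin_apply]
      funext a
      rw [mulVec_extMap, hx]
      exact congrFun h1 a
  rw [← hmap]
  exact LinearEquiv.finrank_eq
    (Submodule.equivMapOfInjective _ (extMap_injective v) _)

lemma exists_mulVec_single (G : Matrix V V (ZMod 2)) (hG : G.IsSymm) (v : V)
    (h0 : ∀ x, G.mulVec x = 0 → x v = 0) :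
    ∃ w, G.mulVec w = Pi.single v 1 := by
  classical
  set f := G.mulVecLin with hf
  have hker : LinearMap.ker f ≤
      LinearMap.ker (LinearMap.proj (R := ZMod 2) (φ := fun _ : V => ZMod 2) v) := by
    intro x hx
    rw [LinearMap.mem_ker, LinearMap.proj_apply]
    exact h0 x hx
  set ψ₀ : LinearMap.range f →ₗ[ZMod 2] ZMod 2 :=
    ((LinearMap.ker f).liftQ _ hker).comp
      (f.quotKerEquivRange.symm : LinearMap.range f →ₗ[ZMod 2] _) with hψ₀
  obtain ⟨ψ, hψ⟩ := LinearMap.exists_extend ψ₀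
  have key : ∀ x, ψ (f x) = x v := by
    intro x
    have h1 : f.quotKerEquivRange.symm (⟨f x, LinearMap.mem_range_self f x⟩ :
        LinearMap.range f) = Submodule.Quotient.mk x := by
      rw [LinearEquiv.symm_apply_eq]
      exact Subtype.ext ((f.quotKerEquivRange_apply_mk x).symm)
    have h2 : ψ (f x) = ψ₀ ⟨f x, LinearMap.mem_range_self f x⟩ :=
      congrFun (congrArg DFunLike.coe hψ) ⟨f x, LinearMap.mem_range_self f x⟩
    rw [h2, hψ₀, LinearMap.comp_apply, LinearEquiv.coe_coe, h1, Submodule.liftQ_apply,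
      LinearMap.proj_apply]
  set w : V → ZMod 2 := fun u => ψ (fun j => if u = j then 1 else 0) with hwdef
  have ψdot : ∀ y : V → ZMod 2, ψ y = w ⬝ᵥ y := by
    intro y
    rw [LinearMap.pi_apply_eq_sum_univ ψ y]
    simp only [dotProduct, hwdef]
    exact Finset.sum_congr rfl fun i _ => by rw [smul_eq_mul, mul_comm]
  have main : ∀ x : V → ZMod 2, G.mulVec w ⬝ᵥ x = x v := by
    intro x
    have := key x
    rw [hf, Matrix.mulVecLin_apply, ψdot, Matrix.dotProduct_mulVec,
      ← Matrix.mulVec_transpose, hG.eq] at this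
    rw [dotProduct_comm, ← this]
    rw [Matrix.dotProduct_mulVec, ← Matrix.mulVec_transpose, hG.eq,
      dotProduct_comm, Matrix.dotProduct_mulVec, ← Matrix.mulVec_transpose, hG.eq]
  refine ⟨w, ?_⟩
  funext u
  have := main (Pi.single u 1)
  rw [dotProduct_single, mul_one] at this
  rw [this, Pi.single_apply, Pi.single_apply]
  by_cases h : u = v
  · simp [h]
  · simp [h, Ne.symm h]
/-- for a graph `G` and vertex `v`, among the nullities `n(G)`,
`n(G∖v)`, `n(G+v)`, precisely two equal some `m` and the third equals `m + 1`. -/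
theorem nullity_delete_loop (G : Matrix V V (ZMod 2)) (hG : G.IsSymm) (v : V) :
    ∃ m : ℕ,
      (nullity G = m ∧ nullity (deleteVertex G v) = m ∧
        nullity (loopCompl G v) = m + 1) ∨
      (nullity G = m ∧ nullity (loopCompl G v) = m ∧
        nullity (deleteVertex G v) = m + 1) ∨
      (nullity (deleteVertex G v) = m ∧ nullity (loopCompl G v) = m ∧
        nullity G = m + 1) := by
  classical
  set f := G.mulVecLin with hf
  set K := LinearMap.ker f with hK
  set φ : (V → ZMod 2) →ₗ[ZMod 2] ZMod 2 :=
    LinearMap.proj (R := ZMod 2) (φ := fun _ : V => ZMod 2) v with hφ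
  set π := LinearMap.funLeft (ZMod 2) (ZMod 2) (Subtype.val : {x : V // x ≠ v} → V) with hπ
  set Wm := LinearMap.ker (π.comp f) with hWm
  have hKmem : ∀ x, x ∈ K ↔ G.mulVec x = 0 := fun x => by
    rw [hK, LinearMap.mem_ker, hf, Matrix.mulVecLin_apply]
  have hφmem : ∀ x, x ∈ LinearMap.ker φ ↔ x v = 0 := fun x => by
    rw [hφ, LinearMap.mem_ker, LinearMap.proj_apply]
  have hdel : nullity (deleteVertex G v)
      = finrank (ZMod 2) ((Wm ⊓ LinearMap.ker φ : Submodule (ZMod 2) (V → ZMod 2))) :=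
    nullity_deleteVertex_eq G v
  have hG0 : nullity G = finrank (ZMod 2) K := nullity_eq_finrank_ker G
  have hlcmem : ∀ x, x ∈ LinearMap.ker (loopCompl G v).mulVecLin ↔
      G.mulVec x = Pi.single v (x v) := mem_ker_loopCompl G v
  have hlc : nullity (loopCompl G v)
      = finrank (ZMod 2) (LinearMap.ker (loopCompl G v).mulVecLin) :=
    nullity_eq_finrank_ker _
  have hWmem : ∀ x, x ∈ Wm ↔ ∀ u, u ≠ v → G.mulVec x u = 0 := by
    intro x
    rw [hWm, LinearMap.mem_ker, LinearMap.comp_apply, hf, Matrix.mulVecLin_apply]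
    constructor
    · intro h u hu
      exact congrFun h ⟨u, hu⟩
    · intro h
      funext u
      exact h u.val u.prop
  have hWsingle : ∀ x, x ∈ Wm → G.mulVec x = Pi.single v (G.mulVec x v) := by
    intro x hx
    funext u
    by_cases h : u = v
    · subst h; simp
    · rw [(hWmem x).1 hx u h, Pi.single_apply, if_neg h]
  have hsingle : ∀ c : ZMod 2, (Pi.single v c : V → ZMod 2)
      = c • (Pi.single v (1 : ZMod 2) : V → ZMod 2) := by
    intro c
    funext u
    rw [Pi.smul_apply, Pi.single_apply, Pi.single_apply]
    by_cases h : u = v <;> simp [h]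
  by_cases hw : ∃ w, G.mulVec w = Pi.single v 1
  · obtain ⟨w, hwv⟩ := hw
    have hK0 : ∀ x, G.mulVec x = 0 → x v = 0 := symm_ker_vanish G hG v w hwv
    have hwK : w ∉ K := by
      intro h
      have h2 := (hKmem w).1 h
      rw [hwv] at h2
      have := congrFun h2 v
      simp at this
    have hw0 : w ≠ 0 := by
      intro h
      exact hwK (h ▸ zero_mem K)
    have hdecomp : ∀ x, x ∈ Wm → x - (G.mulVec x v) • w ∈ K := by
      intro x hx
      rw [hKmem, Matrix.mulVec_sub, Matrix.mulVec_smul, hwv, ← hsingle, sub_eq_zero]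
      exact hWsingle x hx
    have hwWm : w ∈ Wm := by
      rw [hWmem]
      intro u hu
      rw [hwv, Pi.single_apply, if_neg hu]
    have hKWm : K ≤ Wm := by
      intro x hx
      rw [hWmem]
      intro u _
      rw [(hKmem x).1 hx, Pi.zero_apply]
    have hWmK : Wm = K ⊔ Submodule.span (ZMod 2) {w} := by
      apply le_antisymm
      · intro x hx
        have hxc := hdecomp x hx
        have hxeq : x = (x - (G.mulVec x v) • w) + (G.mulVec x v) • w := by abel
        rw [hxeq]
        exact Submodule.add_mem_sup hxc
          (Submodule.smul_mem _ _ (Submodule.mem_span_singleton_self w))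
      · exact sup_le hKWm
          ((Submodule.span_singleton_le_iff_mem w Wm).2 hwWm)
    rcases zmod2_cases (w v) with hwv0 | hwv1
    · -- Case 2a : w v = 0
      have hsub : Wm ≤ LinearMap.ker φ := by
        rw [hWmK]
        apply sup_le
        · intro x hx
          rw [hφmem]
          exact hK0 x ((hKmem x).1 hx)
        · rw [Submodule.span_singleton_le_iff_mem]
          rw [hφmem]
          exact hwv0
      have hS1 : Wm ⊓ LinearMap.ker φ = Wm := inf_eq_left.2 hsub
      have hKlc : LinearMap.ker (loopCompl G v).mulVecLin = K := by
        ext x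
        rw [hlcmem, hKmem]
        constructor
        · intro h
          rcases zmod2_cases (x v) with h0 | h1
          · rw [h0] at h
            rw [h]
            exact Pi.single_zero v
          · exfalso
            rw [h1] at h
            have hxw : x - w ∈ K := by
              rw [hKmem, Matrix.mulVec_sub, hwv, h, sub_self]
            have h2 := hK0 (x - w) ((hKmem _).1 hxw)
            rw [Pi.sub_apply, hwv0, sub_zero, h1] at h2
            exact one_ne_zero h2
        · intro h
          rw [h, hK0 x h, Pi.single_zero]
      refine ⟨finrank (ZMod 2) K, Or.inr (Or.inl ⟨hG0, ?_, ?_⟩)⟩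
      · rw [hlc, hKlc]
      · rw [hdel, hS1, hWmK, finrank_sup_span_singleton K w hwK hw0]
    · -- Case 2b : w v = 1
      have hS1K : Wm ⊓ LinearMap.ker φ = K := by
        apply le_antisymm
        · rintro x hx
          rw [Submodule.mem_inf] at hx
          obtain ⟨hx1, hx2⟩ := hx
          have hxc := hdecomp x hx1
          have hkv := hK0 _ ((hKmem _).1 hxc)
          rw [Pi.sub_apply, Pi.smul_apply, (hφmem x).1 hx2, hwv1, zero_sub,
            smul_eq_mul, mul_one, neg_eq_zero] at hkv
          rw [hkv, zero_smul, sub_zero] at hxc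
          exact hxc
        · exact le_inf hKWm (fun x hx => (hφmem x).2 (hK0 x ((hKmem x).1 hx)))
      have hKlc : LinearMap.ker (loopCompl G v).mulVecLin
          = K ⊔ Submodule.span (ZMod 2) {w} := by
        apply le_antisymm
        · intro x hx
          rw [hlcmem] at hx
          have hxc : x - (x v) • w ∈ K := by
            rw [hKmem, Matrix.mulVec_sub, Matrix.mulVec_smul, hwv, ← hsingle, sub_eq_zero]
            exact hx
          have hxeq : x = (x - (x v) • w) + (x v) • w := by abel
          rw [hxeq]
          exact Submodule.add_mem_sup hxc
            (Submodule.smul_mem _ _ (Submodule.mem_span_singleton_self w))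
        · apply sup_le
          · intro x hx
            rw [hlcmem, (hKmem x).1 hx, hK0 x ((hKmem x).1 hx), Pi.single_zero]
          · rw [Submodule.span_singleton_le_iff_mem, hlcmem, hwv1]
            exact hwv
      refine ⟨finrank (ZMod 2) K, Or.inl ⟨hG0, ?_, ?_⟩⟩
      · rw [hdel, hS1K]
      · rw [hlc, hKlc, finrank_sup_span_singleton K w hwK hw0]
  · -- Case 1 : no w with G w = e_v
    have hk : ∃ k, G.mulVec k = 0 ∧ k v = 1 := by
      by_contra hcon
      push_neg at hcon
      apply hw
      apply exists_mulVec_single G hG v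
      intro x hx
      rcases zmod2_cases (x v) with h0 | h1
      · exact h0
      · exact absurd h1 (hcon x hx)
    obtain ⟨k, hk0, hkv⟩ := hk
    have hWmK : Wm = K := by
      apply le_antisymm
      · intro x hx
        have hs := hWsingle x hx
        rcases zmod2_cases (G.mulVec x v) with h0 | h1
        · rw [hKmem, hs, h0, Pi.single_zero]
        · rw [h1] at hs
          exact absurd ⟨x, hs⟩ hw
      · intro x hx
        rw [hWmem]
        intro u _
        rw [(hKmem x).1 hx, Pi.zero_apply]
    have hKlc : LinearMap.ker (loopCompl G v).mulVecLin = K ⊓ LinearMap.ker φ := by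
      ext x
      rw [hlcmem, Submodule.mem_inf, hKmem, hφmem]
      constructor
      · intro h
        rcases zmod2_cases (x v) with h0 | h1
        · rw [h0, Pi.single_zero] at h
          exact ⟨h, h0⟩
        · rw [h1] at h
          exact absurd ⟨x, h⟩ hw
      · rintro ⟨h1, h2⟩
        rw [h1, h2, Pi.single_zero]
    have hφk : φ k ≠ 0 := by
      have : φ k = k v := by rw [hφ, LinearMap.proj_apply]
      rw [this, hkv]
      exact one_ne_zero
    have hrank := finrank_inf_ker_add_one K φ k ((hKmem k).2 hk0) hφk
    refine ⟨finrank (ZMod 2) (K ⊓ LinearMap.ker φ : Submodule (ZMod 2) (V → ZMod 2)),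
      Or.inr (Or.inr ⟨?_, ?_, ?_⟩)⟩
    · rw [hdel, hWmK]
    · rw [hlc, hKlc]
    · rw [hG0, ← hrank]
end
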